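/- Assume k is even and tr(a) = 1. Then the graph G_k(a) is vertex-transitive: for any two vertices u and v there is a graph automorphism of G_k(a) mapping u to v. -/

import Mathlib

/-- The absolute trace `tr(x) = x + x² + x⁴ + ⋯ + x^{2^{k-1}}` of a finite field
of order `2^k`, taking values in the prime subfield `{0, 1} ⊆ F`. -/
def fieldTr {F : Type*} [Field F] (k : ℕ) (x : F) : F :=
  ∑ i ∈ Finset.range k, x ^ (2 ^ i)

/-- The defining relation of the graph `G_k(a)` on the vertex set `F ∪ {∞}`
(with `∞ = none`): distinct `x, y ∈ F` are related iff
`tr((xy + x + a)/(x + y)) = 0`, and `x ∈ F` is related to `∞` iff `tr(x) = 0`. -/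
def adjRel {F : Type*} [Field F] (k : ℕ) (a : F) : Option F → Option F → Prop
  | some x, some y => fieldTr k ((x * y + x + a) / (x + y)) = 0
  | some x, none   => fieldTr k x = 0
  | none,   some y => fieldTr k y = 0
  | none,   none   => False

/-- The graph `G_k(a)` on the vertex set `F ∪ {∞}`.  (When `tr(1) = 0`, the
relation `adjRel` is symmetric on distinct vertices, so `fromRel` produces
exactly the graph whose adjacency is given by `adjRel`.) -/
def Gka {F : Type*} [Field F] (k : ℕ) (a : F) : SimpleGraph (Option F) :=
  SimpleGraph.fromRel (adjRel k a)

set_option linter.unusedSectionVars false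

section Aux

variable {F : Type*} [Field F] [CharP F 2]

lemma fieldTr_add (k : ℕ) (x y : F) : fieldTr k (x + y) = fieldTr k x + fieldTr k y := by
  unfold fieldTr
  rw [← Finset.sum_add_distrib]
  exact Finset.sum_congr rfl fun i _ => add_pow_char_pow x y 2 i

lemma fieldTr_one (k : ℕ) (hk : Even k) : fieldTr k (1 : F) = 0 := by
  simp only [fieldTr, one_pow, Finset.sum_const, Finset.card_range, nsmul_eq_mul, mul_one]
  exact (CharP.cast_eq_zero_iff F 2 k).mpr hk.two_dvd

lemma fieldTr_zero (k : ℕ) : fieldTr k (0 : F) = 0 := by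
  simp [fieldTr, zero_pow (pow_ne_zero _ two_ne_zero)]

lemma fieldTr_sq [Fintype F] (k : ℕ) (hcard : Fintype.card F = 2 ^ k) (x : F) :
    fieldTr k (x ^ 2) = fieldTr k x := by
  have hself : ∀ z : F, z + z = 0 := fun z => CharTwo.add_self_eq_zero z
  have h1 : x + fieldTr k (x ^ 2) = x ^ 2 ^ k + fieldTr k x := by
    unfold fieldTr
    have e1 : x + ∑ i ∈ Finset.range k, (x ^ 2) ^ 2 ^ i = ∑ i ∈ Finset.range (k+1), x ^ 2 ^ i := by
      rw [Finset.sum_range_succ' (fun i => x ^ 2 ^ i) k]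
      rw [add_comm]
      congr 1
      · exact Finset.sum_congr rfl fun i _ => by rw [← pow_mul, ← pow_succ']
      · simp
    have e2 : x ^ 2 ^ k + ∑ i ∈ Finset.range k, x ^ 2 ^ i = ∑ i ∈ Finset.range (k+1), x ^ 2 ^ i := by
      rw [Finset.sum_range_succ (fun i => x ^ 2 ^ i) k, add_comm]
    rw [e1, e2]
  have hxk : x ^ 2 ^ k = x := by rw [← hcard]; exact FiniteField.pow_card x
  rw [hxk] at h1
  have := congrArg (fun z => x + z) h1
  simpa [← add_assoc, hself x] using this

lemma fieldTr_addone (k : ℕ) (hk : Even k) (x : F) : fieldTr k (x + 1) = fieldTr k x := by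
  rw [fieldTr_add, fieldTr_one k hk, add_zero]

lemma addc_ne_zero {x c : F} (h : x ≠ c) : x + c ≠ 0 := by
  intro h0
  exact h (sub_eq_zero.mp (by rwa [CharTwo.sub_eq_add]))

lemma idA (a c x y : F) (hx : x + c ≠ 0) (hy : y + c ≠ 0) :
    (c + (c^2+c+a)/(x+c)) + (c + (c^2+c+a)/(y+c)) = (c^2+c+a)*(x+y)/((x+c)*(y+c)) := by
  have h2 : (2:F) = 0 := CharTwo.two_eq_zero
  field_simp
  linear_combination (c*x*y + c^2 + c^2*y + c^2*x + 2*c^3 + a*c) * h2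

lemma idC (a c x : F) (hx : x + c ≠ 0) :
    c + (c^2+c+a)/(x+c) = (x*c + c + a)/(x+c) := by
  have h2 : (2:F) = 0 := CharTwo.two_eq_zero
  field_simp
  linear_combination (c^2) * h2

lemma idF (a x y : F) (hxy : x + y ≠ 0) :
    (x*y + x + a)/(x+y) = (x*y + y + a)/(x+y) + 1 := by
  have h2 : (2:F) = 0 := CharTwo.two_eq_zero
  field_simp
  linear_combination (-y) * h2

lemma idB (a c x y : F) (hx : x + c ≠ 0) (hy : y + c ≠ 0) (hxy : x + y ≠ 0)
    (hb : c^2+c+a ≠ 0) :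
    ((c + (c^2+c+a)/(x+c)) * (c + (c^2+c+a)/(y+c)) + (c + (c^2+c+a)/(x+c)) + a) /
      ((c + (c^2+c+a)/(x+c)) + (c + (c^2+c+a)/(y+c))) = (x*y + y + a)/(x+y) := by
  have h2 : (2:F) = 0 := CharTwo.two_eq_zero
  have hA := idA a c x y hx hy
  have hAne : (c + (c^2+c+a)/(x+c)) + (c + (c^2+c+a)/(y+c)) ≠ 0 := by
    rw [hA]
    exact div_ne_zero (mul_ne_zero hb hxy) (mul_ne_zero hx hy)
  rw [div_eq_div_iff hAne hxy]
  field_simp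
  linear_combination ((-1)*c*x*y^2 + (-1)*c*x^2*y^2 + (1)*c^2*x + (-1)*c^2*x*y^2 + (1)*c^2*x^2 + (-1)*c^2*x^2*y + (1)*c^3*y + (1)*c^3*y^2 + (3)*c^3*x + (1)*c^3*x^2 + (2)*c^4*y + (2)*c^4*x + (1)*a*c*y^2 + (1)*a*c*x + (1)*a*c*x^2 + (-1)*a*c^2 + (1)*a*c^2*y + (1)*a*c^2*x + (-2)*a*c^3 + (-1)*a^2*c) * h2

lemma idD (a c y : F) (hy : y + c ≠ 0) (hb : c^2+c+a ≠ 0) :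
    (c * (c + (c^2+c+a)/(y+c)) + c + a) / (c + (c + (c^2+c+a)/(y+c))) = y := by
  have h2 : (2:F) = 0 := CharTwo.two_eq_zero
  have hden : c + (c + (c^2+c+a)/(y+c)) = (c^2+c+a)/(y+c) := by
    rw [← add_assoc, CharTwo.add_self_eq_zero, zero_add]
  rw [hden, div_eq_iff (div_ne_zero hb hy)]
  field_simp
  linear_combination (c^2 + c^3 + a*c) * h2

lemma idE (a c y : F) (hy : y + c ≠ 0) (hb : c^2+c+a ≠ 0) :
    ((c + (c^2+c+a)/(y+c)) * c + (c + (c^2+c+a)/(y+c)) + a) /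
      ((c + (c^2+c+a)/(y+c)) + c) = y + 1 := by
  have h2 : (2:F) = 0 := CharTwo.two_eq_zero
  have hden : (c + (c^2+c+a)/(y+c)) + c = (c^2+c+a)/(y+c) := by
    rw [add_comm c ((c^2+c+a)/(y+c)), add_assoc, CharTwo.add_self_eq_zero, add_zero]
  rw [hden, div_eq_iff (div_ne_zero hb hy)]
  field_simp
  linear_combination (c^2 + c^3 + a*c) * h2

end Aux

section Tau

variable {F : Type*} [Field F] [CharP F 2]

open Classical in
noncomputable def tauFun (a c : F) : Option F → Option F
  | none => some c
  | some x => if x = c then none else some (c + (c^2+c+a)/(x+c))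

variable {a c : F}

lemma tauFun_none : tauFun a c none = some c := rfl

lemma tauFun_self : tauFun a c (some c) = none := by simp [tauFun]

lemma tauFun_some {x : F} (h : x ≠ c) :
    tauFun a c (some x) = some (c + (c^2+c+a)/(x+c)) := by
  simp [tauFun, h]

lemma tau_ne (hb : c^2+c+a ≠ 0) {x : F} (h : x ≠ c) : c + (c^2+c+a)/(x+c) ≠ c := by
  intro h0
  have h1 : (c^2+c+a)/(x+c) = 0 := add_eq_left.mp h0
  exact hb ((div_eq_zero_iff.mp h1).resolve_right (addc_ne_zero h))

lemma tau_invol (hb : c^2+c+a ≠ 0) : Function.Involutive (tauFun a c) := by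
  intro u
  match u with
  | none => rw [tauFun_none, tauFun_self]
  | some x =>
    by_cases h : x = c
    · subst h; rw [tauFun_self, tauFun_none]
    · rw [tauFun_some h, tauFun_some (tau_ne hb h)]
      congr 1
      have hxc : x + c ≠ 0 := addc_ne_zero h
      have hstep : c + (c^2+c+a)/(x+c) + c = (c^2+c+a)/(x+c) := by
        ring_nf
        rw [CharTwo.two_eq_zero]
        ring
      rw [hstep, div_div_eq_mul_div, mul_comm, mul_div_assoc, div_self hb, mul_one]
      ring_nf
      rw [CharTwo.two_eq_zero]
      ring

end Tau

section Adj

variable {F : Type*} [Field F] [CharP F 2]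

lemma adjRel_symm {k : ℕ} {a : F} (hk : Even k) {x y : F} (hxy : x ≠ y) :
    adjRel k a (some x) (some y) ↔ adjRel k a (some y) (some x) := by
  show fieldTr k ((x * y + x + a) / (x + y)) = 0 ↔ fieldTr k ((y * x + y + a) / (y + x)) = 0
  have hxy0 : x + y ≠ 0 := addc_ne_zero hxy
  have h : fieldTr k ((x * y + x + a) / (x + y)) = fieldTr k ((y * x + y + a) / (y + x)) := by
    rw [idF a x y hxy0, fieldTr_addone k hk, mul_comm y x, add_comm y x]
  rw [h]

lemma gka_adj {k : ℕ} {a : F} (hk : Even k) {u v : Option F} :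
    (Gka k a).Adj u v ↔ u ≠ v ∧ adjRel k a u v := by
  rw [Gka, SimpleGraph.fromRel_adj]
  refine and_congr_right fun hne => ?_
  match u, v with
  | none, none => simp [adjRel]
  | none, some y => simp [adjRel]
  | some x, none => simp [adjRel]
  | some x, some y =>
    have hxy : x ≠ y := fun h => hne (by rw [h])
    constructor
    · rintro (h | h)
      · exact h
      · exact (adjRel_symm hk hxy).mpr h
    · exact fun h => Or.inl h

lemma adjRel_tau {k : ℕ} {a c : F} (hk : Even k) (hb : c^2+c+a ≠ 0)
    {u v : Option F} (hne : u ≠ v) :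
    adjRel k a (tauFun a c u) (tauFun a c v) ↔ adjRel k a u v := by
  match u, v with
  | none, none => exact absurd rfl hne
  | none, some y =>
    by_cases hy : y = c
    · subst hy
      rw [tauFun_none, tauFun_self]
      exact Iff.rfl
    · have hyc : y + c ≠ 0 := addc_ne_zero hy
      rw [tauFun_none, tauFun_some hy]
      show fieldTr k ((c * (c + (c^2+c+a)/(y+c)) + c + a) / (c + (c + (c^2+c+a)/(y+c)))) = 0 ↔
        fieldTr k y = 0
      rw [idD a c y hyc hb]
  | some x, none =>
    by_cases hx : x = c
    · subst hx
      rw [tauFun_self, tauFun_none]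
      exact Iff.rfl
    · have hxc : x + c ≠ 0 := addc_ne_zero hx
      rw [tauFun_some hx, tauFun_none]
      show fieldTr k (((c + (c^2+c+a)/(x+c)) * c + (c + (c^2+c+a)/(x+c)) + a) /
        ((c + (c^2+c+a)/(x+c)) + c)) = 0 ↔ fieldTr k x = 0
      rw [idE a c x hxc hb, fieldTr_addone k hk]
  | some x, some y =>
    have hxy : x ≠ y := fun h => hne (by rw [h])
    have hxy0 : x + y ≠ 0 := addc_ne_zero hxy
    by_cases hx : x = c
    · have hy : y ≠ c := fun h => hxy (hx.trans h.symm)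
      have hyc : y + c ≠ 0 := addc_ne_zero hy
      rw [hx, tauFun_self, tauFun_some hy]
      show fieldTr k (c + (c^2+c+a)/(y+c)) = 0 ↔
        fieldTr k ((c * y + c + a) / (c + y)) = 0
      rw [idC a c y hyc, mul_comm y c, add_comm y c]
    · by_cases hy : y = c
      · have hxc : x + c ≠ 0 := addc_ne_zero hx
        rw [hy, tauFun_some hx, tauFun_self]
        show fieldTr k (c + (c^2+c+a)/(x+c)) = 0 ↔
          fieldTr k ((x * c + x + a) / (x + c)) = 0
        rw [idC a c x hxc, idF a x c hxc, fieldTr_addone k hk]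
      · have hxc : x + c ≠ 0 := addc_ne_zero hx
        have hyc : y + c ≠ 0 := addc_ne_zero hy
        rw [tauFun_some hx, tauFun_some hy]
        show fieldTr k (((c + (c^2+c+a)/(x+c)) * (c + (c^2+c+a)/(y+c)) +
            (c + (c^2+c+a)/(x+c)) + a) /
            ((c + (c^2+c+a)/(x+c)) + (c + (c^2+c+a)/(y+c)))) = 0 ↔
          fieldTr k ((x * y + x + a) / (x + y)) = 0
        rw [idB a c x y hxc hyc hxy0 hb]
        rw [show (x*y + y + a)/(x+y) = (y*x + y + a)/(y+x) by rw [mul_comm x y, add_comm x y]]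
        exact (adjRel_symm (a := a) hk hxy).symm

noncomputable def tauIso {k : ℕ} {a c : F} (hk : Even k) (hb : c^2+c+a ≠ 0) :
    Gka k a ≃g Gka k a where
  toEquiv := (tau_invol hb).toPerm
  map_rel_iff' := by
    intro u v
    show (Gka k a).Adj (tauFun a c u) (tauFun a c v) ↔ (Gka k a).Adj u v
    rw [gka_adj hk, gka_adj hk]
    constructor
    · rintro ⟨hne, hr⟩
      have hne' : u ≠ v := fun h => hne (by rw [h])
      exact ⟨hne', (adjRel_tau hk hb hne').mp hr⟩
    · rintro ⟨hne, hr⟩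
      exact ⟨fun h => hne ((tau_invol hb).injective h), (adjRel_tau hk hb hne).mpr hr⟩

end Adj

theorem Gka_vertex_transitive
    {F : Type*} [Field F] [Fintype F] [CharP F 2] (k : ℕ) (hk : Even k)
    (hcard : Fintype.card F = 2 ^ k) (a : F) (ha : fieldTr k a = 1) :
    ∀ u v : Option F, ∃ φ : Gka k a ≃g Gka k a, φ u = v := by
  have hb : ∀ c : F, c^2 + c + a ≠ 0 := by
    intro c h0
    have h1 : fieldTr k (c^2 + c + a) = 1 := by
      rw [fieldTr_add, fieldTr_add, fieldTr_sq k hcard, ha,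
        CharTwo.add_self_eq_zero, zero_add]
    rw [h0, fieldTr_zero] at h1
    exact zero_ne_one h1
  have key : ∀ w : Option F, ∃ φ : Gka k a ≃g Gka k a, φ none = w := by
    intro w
    match w with
    | none => exact ⟨SimpleGraph.Iso.refl, rfl⟩
    | some c => exact ⟨tauIso hk (hb c), rfl⟩
  intro u v
  obtain ⟨φu, hu⟩ := key u
  obtain ⟨φv, hv⟩ := key v
  refine ⟨φu.symm.trans φv, ?_⟩
  have h1 : φu.symm u = none := by
    rw [← hu]
    exact φu.toEquiv.symm_apply_apply none
  show φv (φu.symm u) = v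
  rw [h1, hv]
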